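/- For the BPS Skyrme model with potential U(η) = η (β = 1), the solution of η_z = −√(η + P̃) with η(0) = π/2 reaching η(Z) = 0 has Z(P̃) = 2(√(π/2 + P̃) − √P̃) for P̃ ≥ 0, and the equation of state is P̃ = (2π − Ṽ²)²/(16Ṽ²) with Ṽ = Z. Consequently dZ/dP̃ → −∞ as P̃ → 0⁺, i.e., the compressibility at zero pressure is infinite. -/

import Mathlib

open Real Filter

/-- For the potential `U(η) = η` (β = 1), any solution of
`η_z = −√(η + P̃)` with `η(0) = π/2`, `η > 0` before reaching `η(Z) = 0`, has
`Z = 2(√(π/2 + P̃) − √P̃)` for `P̃ ≥ 0`; the equation of state is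
`P̃ = (2π − Ṽ²)²/(16Ṽ²)` with `Ṽ = Z`; and `dZ/dP̃ → −∞` as `P̃ → 0⁺`
(infinite compressibility at zero pressure). -/
theorem stmt_14 (P : ℝ) (hP : 0 ≤ P) (η : ℝ → ℝ) (Z : ℝ) (hZpos : 0 < Z)
    (hODE : ∀ z ∈ Set.Icc (0 : ℝ) Z, HasDerivAt η (-Real.sqrt (η z + P)) z)
    (h0 : η 0 = π / 2) (hZ : η Z = 0)
    (hpos : ∀ z, 0 ≤ z → z < Z → 0 < η z)
    (Zf : ℝ → ℝ)
    (hZf : ∀ p : ℝ, Zf p = 2 * (Real.sqrt (π / 2 + p) - Real.sqrt p)) :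
    Z = 2 * (Real.sqrt (π / 2 + P) - Real.sqrt P) ∧
    P = (2 * π - Z ^ 2) ^ 2 / (16 * Z ^ 2) ∧
    Tendsto (fun p => deriv Zf p) (nhdsWithin 0 (Set.Ioi 0)) atBot := by
  -- the auxiliary function g z = sqrt (η z + P) + z / 2 is constant on [0, Z]
  set g : ℝ → ℝ := fun z => Real.sqrt (η z + P) + z / 2 with hg
  have hηc : ContinuousOn η (Set.Icc 0 Z) :=
    fun z hz => (hODE z hz).continuousAt.continuousWithinAt
  have hcont : ContinuousOn g (Set.Icc 0 Z) := by
    apply ContinuousOn.add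
    · exact Real.continuous_sqrt.comp_continuousOn (hηc.add continuousOn_const)
    · exact (continuous_id.div_const 2).continuousOn
  have hderiv : ∀ x ∈ Set.Ico (0:ℝ) Z, HasDerivWithinAt g 0 (Set.Ici x) x := by
    intro x hx
    have hxpos : 0 < η x + P := by
      have := hpos x hx.1 hx.2
      linarith
    have hs : HasDerivAt (fun z => Real.sqrt (η z + P))
        (1 / (2 * Real.sqrt (η x + P)) * (-Real.sqrt (η x + P))) x := by
      have h1 : HasDerivAt (fun z => η z + P) (-Real.sqrt (η x + P)) x :=
        (hODE x ⟨hx.1, le_of_lt hx.2⟩).add_const P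
      exact (Real.hasDerivAt_sqrt (ne_of_gt hxpos)).comp x h1
    have hsq : Real.sqrt (η x + P) ≠ 0 := by positivity
    have : HasDerivAt g 0 x := by
      have h2 : HasDerivAt (fun z : ℝ => z / 2) (1/2) x := (hasDerivAt_id x).div_const 2
      have h3 := hs.add h2
      refine h3.congr_deriv ?_
      field_simp
      ring
    exact this.hasDerivWithinAt
  have hconst := constant_of_has_deriv_right_zero hcont hderiv Z
    ⟨le_of_lt hZpos, le_refl Z⟩
  -- hconst : g Z = g 0
  have hg0 : g 0 = Real.sqrt (π / 2 + P) := by simp [hg, h0]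
  have hgZ : g Z = Real.sqrt P + Z / 2 := by simp [hg, hZ]
  have hZeq : Z = 2 * (Real.sqrt (π / 2 + P) - Real.sqrt P) := by
    rw [hg0, hgZ] at hconst; linarith
  refine ⟨hZeq, ?_, ?_⟩
  · -- equation of state
    have hπP : (0:ℝ) ≤ π / 2 + P := by have := pi_pos; linarith
    have hsum : Z / 2 + Real.sqrt P = Real.sqrt (π / 2 + P) := by linarith
    have hsq : (Z / 2 + Real.sqrt P) ^ 2 = π / 2 + P := by
      rw [hsum, sq_sqrt hπP]
    have hPsq : Real.sqrt P ^ 2 = P := sq_sqrt hP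
    have hroot : Real.sqrt P = (2 * π - Z ^ 2) / (4 * Z) := by
      have hZne : Z ≠ 0 := ne_of_gt hZpos
      field_simp
      nlinarith [hsq, hPsq]
    have : P = Real.sqrt P ^ 2 := (sq_sqrt hP).symm
    rw [this, hroot, div_pow]
    congr 1
    ring
  · -- compressibility
    have hev : ∀ p ∈ Set.Ioi (0:ℝ),
        deriv Zf p = 2 * (1 / (2 * Real.sqrt (π / 2 + p)) - 1 / (2 * Real.sqrt p)) := by
      intro p hp
      have hp0 : (0:ℝ) < p := hp
      have hπp : (0:ℝ) < π / 2 + p := by have := pi_pos; linarith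
      have h1 : HasDerivAt (fun q : ℝ => Real.sqrt (π / 2 + q))
          (1 / (2 * Real.sqrt (π / 2 + p)) * 1) p := by
        have := (Real.hasDerivAt_sqrt (ne_of_gt hπp)).comp p
          ((hasDerivAt_id p).const_add (π / 2))
        simpa [Function.comp_def] using this
      have h2 : HasDerivAt Real.sqrt (1 / (2 * Real.sqrt p)) p :=
        Real.hasDerivAt_sqrt (ne_of_gt hp0)
      have h3 : HasDerivAt Zf (2 * (1 / (2 * Real.sqrt (π / 2 + p)) - 1 / (2 * Real.sqrt p))) p := by
        have h4 := (h1.sub h2).const_mul 2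
        have hfun : Zf = fun q => 2 * (Real.sqrt (π / 2 + q) - Real.sqrt q) := funext hZf
        rw [hfun]
        simpa using h4
      exact h3.deriv
    have hcongr : (fun p => deriv Zf p) =ᶠ[nhdsWithin 0 (Set.Ioi 0)]
        fun p => (Real.sqrt (π / 2 + p))⁻¹ + -(Real.sqrt p)⁻¹ := by
      filter_upwards [self_mem_nhdsWithin] with p hp
      rw [hev p hp]
      have h1 : Real.sqrt (π / 2 + p) ≠ 0 := by
        have hp0 : (0:ℝ) < p := hp
        have := pi_pos
        positivity
      have h2 : Real.sqrt p ≠ 0 := by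
        have hp0 : (0:ℝ) < p := hp
        positivity
      field_simp
      ring
    rw [tendsto_congr' hcongr]
    apply Filter.Tendsto.add_atBot (C := (Real.sqrt (π / 2))⁻¹)
    · have hca : ContinuousAt (fun p : ℝ => (Real.sqrt (π / 2 + p))⁻¹) 0 := by
        apply ContinuousAt.inv₀
        · exact (Real.continuous_sqrt.comp (continuous_const.add continuous_id)).continuousAt
        · have := pi_pos
          simp only [add_zero]
          positivity
      have := hca.continuousWithinAt (s := Set.Ioi 0)
      simpa using this.tendsto
    · have hsq : Tendsto (fun p : ℝ => Real.sqrt p) (nhdsWithin 0 (Set.Ioi 0))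
          (nhdsWithin 0 (Set.Ioi 0)) := by
        rw [tendsto_nhdsWithin_iff]
        constructor
        · have : Tendsto (fun p : ℝ => Real.sqrt p) (nhds 0) (nhds 0) := by
            have := Real.continuous_sqrt.continuousAt (x := (0:ℝ))
            simpa using this.tendsto
          exact this.mono_left nhdsWithin_le_nhds
        · filter_upwards [self_mem_nhdsWithin] with p hp
          exact Real.sqrt_pos.2 hp
      exact tendsto_neg_atTop_atBot.comp (tendsto_inv_nhdsGT_zero.comp hsq)
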